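/- arXiv:2008.08972 — 4 statements merged into one kernel-verified Lean document; each statement's English description precedes it below -/
import Mathlib

section
/- Let T₀ ∈ ℝ, M, K, m ∈ ℕ. Let Σ : [T₀,∞) → ℝ^{M×K} and Δ : [T₀,∞) → ℝ^{M×m} be continuous matrix-valued functions such that ‖Σ(t)‖_F ≤ Σ̄ and ‖Δ(t)‖_F ≤ Δ̄ for all t ≥ T₀, and such that the uniform full-rank condition holds: there is k > 0 with vᵀ Σ(t)ᵀ Σ(t) v ≥ k‖v‖² for all v ∈ ℝ^K and t ≥ T₀. Let α, β > 0, and let Γ : [T₀,∞) → ℝ^{K×K} be differentiable with Γ(t) symmetric positive definite, satisfying the Riccati update law Γ'(t) = β Γ(t) − α Γ(t) Σ(t)ᵀ Σ(t) Γ(t) and the uniform gain bounds γ̲ I ⪯ Γ(t) ⪯ γ̄ I for all t ≥ T₀, where 0 < γ̲ ≤ γ̄. Let W̃ : [T₀,∞) → ℝ^{K×m} be differentiable and satisfy the weight-error dynamics W̃'(t) = −α Γ(t) Σ(t)ᵀ (Σ(t) W̃(t) − Δ(t)). Define A := (γ̲/2)(α k + β/γ̄) and B := 2(α Σ̄ Δ̄)²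 / (α k + β/γ̄). Then the function V(t) := tr(W̃(t)ᵀ Γ(t)⁻¹ W̃(t)) satisfies V(t) ≤ V(T₀) e^{−A(t−T₀)} + B/A for all t ≥ T₀, and consequently limsup_{t→∞} ‖W̃(t)‖_F ≤ √(γ̄ B / A); in particular W̃ is uniformly ultimately bounded. -/
open Matrix Filter

attribute [local instance] Matrix.normedAddCommGroup Matrix.normedSpace

/-- The Frobenius norm of a real matrix. -/
noncomputable def frobNorm {M K : ℕ} (A : Matrix (Fin M) (Fin K) ℝ) : ℝ :=
  Real.sqrt (∑ i, ∑ j, (A i j) ^ 2)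

/-- The Euclidean norm of a real vector. -/
noncomputable def euclNorm {K : ℕ} (v : Fin K → ℝ) : ℝ :=
  Real.sqrt (∑ i, (v i) ^ 2)

section Helpers

lemma entry_hasDerivAt {p q : ℕ} {f : ℝ → Matrix (Fin p) (Fin q) ℝ}
    {f' : Matrix (Fin p) (Fin q) ℝ} {t : ℝ} (h : HasDerivAt f f' t) (i : Fin p) (j : Fin q) :
    HasDerivAt (fun s => f s i j) (f' i j) t :=
  hasDerivAt_pi.1 (hasDerivAt_pi.1 h i) j

lemma det_differentiableAt {p : ℕ} {A : ℝ → Matrix (Fin p) (Fin p) ℝ} {t : ℝ}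
    (h : ∀ i j, DifferentiableAt ℝ (fun s => A s i j) t) :
    DifferentiableAt ℝ (fun s => (A s).det) t := by
  have he : (fun s => (A s).det) = fun s => ∑ σ : Equiv.Perm (Fin p),
      ((Equiv.Perm.sign σ : ℤ) : ℝ) * ∏ i, A s (σ i) i := by
    funext s; rw [Matrix.det_apply]
    simp [Units.smul_def, zsmul_eq_mul]
  rw [he]
  refine DifferentiableAt.fun_sum fun σ _ => ?_
  exact (DifferentiableAt.fun_finsetProd (fun i _ => h (σ i) i)).const_mul _

lemma inv_entry_differentiableAt {p : ℕ} {A : ℝ → Matrix (Fin p) (Fin p) ℝ} {t : ℝ}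
    (h : ∀ i j, DifferentiableAt ℝ (fun s => A s i j) t) (hdet : (A t).det ≠ 0) (i j : Fin p) :
    DifferentiableAt ℝ (fun s => (A s)⁻¹ i j) t := by
  have hrw : (fun s => (A s)⁻¹ i j) = fun s => ((A s).det)⁻¹ * (A s).adjugate i j := by
    funext s; rw [Matrix.inv_def]
    simp [Ring.inverse_eq_inv']
  rw [hrw]
  have hadj : DifferentiableAt ℝ (fun s => (A s).adjugate i j) t := by
    have he : (fun s => (A s).adjugate i j)
        = fun s => ((A s).updateRow j (Pi.single i 1)).det := by
      funext s; rw [Matrix.adjugate_apply]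
    rw [he]
    refine det_differentiableAt fun a b => ?_
    simp only [Matrix.updateRow_apply]
    by_cases hab : a = j
    · simp only [if_pos hab]; exact differentiableAt_const _
    · simp only [if_neg hab]; exact h a b
  exact ((det_differentiableAt h).inv hdet).mul hadj

lemma inv_hasDerivAt {p : ℕ} {A : ℝ → Matrix (Fin p) (Fin p) ℝ}
    {A' : Matrix (Fin p) (Fin p) ℝ} {t : ℝ}
    (h : ∀ i j, HasDerivAt (fun s => A s i j) (A' i j) t) (hdet : (A t).det ≠ 0) :
    ∀ i j, HasDerivAt (fun s => (A s)⁻¹ i j) ((-((A t)⁻¹ * A' * (A t)⁻¹)) i j) t := by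
  have hdiff : ∀ i j, DifferentiableAt ℝ (fun s => (A s)⁻¹ i j) t :=
    inv_entry_differentiableAt (fun i j => (h i j).differentiableAt) hdet
  set D : Matrix (Fin p) (Fin p) ℝ := Matrix.of (fun i j => deriv (fun s => (A s)⁻¹ i j) t)
    with hD
  have hDd : ∀ i j, HasDerivAt (fun s => (A s)⁻¹ i j) (D i j) t := fun i j =>
    (hdiff i j).hasDerivAt
  have hdetc : ContinuousAt (fun s => (A s).det) t :=
    (det_differentiableAt (fun i j => (h i j).differentiableAt)).continuousAt
  have hev : ∀ᶠ s in nhds t, (A s).det ≠ 0 := hdetc.eventually_ne hdet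
  have hzero : ∀ i j, (∑ l, (D i l * A t l j + (A t)⁻¹ i l * A' l j)) = 0 := by
    intro i j
    have h1 : HasDerivAt (fun s => ∑ l, (A s)⁻¹ i l * A s l j)
        (∑ l, (D i l * A t l j + (A t)⁻¹ i l * A' l j)) t :=
      HasDerivAt.fun_sum fun l _ => (hDd i l).mul (h l j)
    have hconst : (fun s => ∑ l, (A s)⁻¹ i l * A s l j)
        =ᶠ[nhds t] fun _ => (1 : Matrix (Fin p) (Fin p) ℝ) i j := by
      filter_upwards [hev] with s hs
      have h3 : (A s)⁻¹ * A s = 1 := Matrix.nonsing_inv_mul (A s) (isUnit_iff_ne_zero.2 hs)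
      calc (∑ l, (A s)⁻¹ i l * A s l j) = ((A s)⁻¹ * A s) i j := (Matrix.mul_apply).symm
        _ = (1 : Matrix (Fin p) (Fin p) ℝ) i j := by rw [h3]
    have h2 : HasDerivAt (fun s => ∑ l, (A s)⁻¹ i l * A s l j) 0 t :=
      (hasDerivAt_const t _).congr_of_eventuallyEq hconst
    exact h1.unique h2
  have hmat : D * A t + (A t)⁻¹ * A' = 0 := by
    ext i j
    simpa [Matrix.mul_apply, Matrix.add_apply, Finset.sum_add_distrib] using hzero i j
  have hDA : D * A t = -((A t)⁻¹ * A') := eq_neg_of_add_eq_zero_left hmat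
  have hDval : D = -((A t)⁻¹ * A' * (A t)⁻¹) := by
    calc D = D * 1 := (Matrix.mul_one D).symm
      _ = D * (A t * (A t)⁻¹) := by
          rw [Matrix.mul_nonsing_inv (A t) (isUnit_iff_ne_zero.2 hdet)]
      _ = (D * A t) * (A t)⁻¹ := by rw [Matrix.mul_assoc]
      _ = (-((A t)⁻¹ * A')) * (A t)⁻¹ := by rw [hDA]
      _ = -((A t)⁻¹ * A' * (A t)⁻¹) := by rw [Matrix.neg_mul]
  intro i j
  have := hDd i j
  rwa [hDval] at this

lemma traceForm_eq_triple_sum {p q : ℕ} (Y : Matrix (Fin p) (Fin q) ℝ)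
    (Mm : Matrix (Fin p) (Fin p) ℝ) (Z : Matrix (Fin p) (Fin q) ℝ) :
    (Yᵀ * Mm * Z).trace = ∑ i : Fin q, ∑ l : Fin p, ∑ j : Fin p, Y j i * Mm j l * Z l i := by
  simp [Matrix.trace, Matrix.diag, Matrix.mul_apply, Finset.sum_mul, Matrix.transpose_apply]

lemma hasDerivAt_traceForm {p q : ℕ} {X : ℝ → Matrix (Fin p) (Fin q) ℝ}
    {N : ℝ → Matrix (Fin p) (Fin p) ℝ} {X' : Matrix (Fin p) (Fin q) ℝ}
    {N' : Matrix (Fin p) (Fin p) ℝ} {t : ℝ}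
    (hX : ∀ i j, HasDerivAt (fun s => X s i j) (X' i j) t)
    (hN : ∀ i j, HasDerivAt (fun s => N s i j) (N' i j) t) :
    HasDerivAt (fun s => ((X s)ᵀ * N s * X s).trace)
      ((X'ᵀ * N t * X t).trace + ((X t)ᵀ * N' * X t).trace + ((X t)ᵀ * N t * X').trace) t := by
  have h1 : HasDerivAt (fun s => ∑ i : Fin q, ∑ l : Fin p, ∑ j : Fin p, X s j i * N s j l * X s l i)
      (∑ i : Fin q, ∑ l : Fin p, ∑ j : Fin p,
        ((X' j i * N t j l + X t j i * N' j l) * X t l i + X t j i * N t j l * X' l i)) t := by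
    refine HasDerivAt.fun_sum fun i _ => HasDerivAt.fun_sum fun l _ => HasDerivAt.fun_sum fun j _ => ?_
    exact ((hX j i).mul (hN j l)).mul (hX l i)
  have hfun : (fun s => ((X s)ᵀ * N s * X s).trace)
      = fun s => ∑ i : Fin q, ∑ l : Fin p, ∑ j : Fin p, X s j i * N s j l * X s l i := by
    funext s; exact traceForm_eq_triple_sum _ _ _
  rw [hfun]
  convert h1 using 1
  rw [traceForm_eq_triple_sum, traceForm_eq_triple_sum, traceForm_eq_triple_sum]
  simp only [← Finset.sum_add_distrib]
  refine Finset.sum_congr rfl fun i _ => Finset.sum_congr rfl fun l _ =>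
    Finset.sum_congr rfl fun j _ => by ring

lemma traceForm_eq_sum_cols {p q : ℕ} (N : Matrix (Fin p) (Fin p) ℝ)
    (X : Matrix (Fin p) (Fin q) ℝ) :
    (Xᵀ * N * X).trace = ∑ i : Fin q, (fun j => X j i) ⬝ᵥ N.mulVec (fun j => X j i) := by
  rw [traceForm_eq_triple_sum]
  refine Finset.sum_congr rfl fun i _ => ?_
  rw [Finset.sum_comm]
  simp only [Matrix.mulVec, dotProduct, Finset.mul_sum]
  exact Finset.sum_congr rfl fun j _ => Finset.sum_congr rfl fun l _ => by ring

lemma psd_cs {p : ℕ} {Mt : Matrix (Fin p) (Fin p) ℝ} (hM : Mt.PosSemidef) (x y : Fin p → ℝ) :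
    (x ⬝ᵥ Mt.mulVec y) ^ 2 ≤ (x ⬝ᵥ Mt.mulVec x) * (y ⬝ᵥ Mt.mulVec y) := by
  have hsym : Mtᵀ = Mt := by
    have h1 := hM.1
    rwa [Matrix.IsHermitian, Matrix.conjTranspose_eq_transpose_of_trivial] at h1
  have hyx : y ⬝ᵥ Mt.mulVec x = x ⬝ᵥ Mt.mulVec y := by
    rw [dotProduct_mulVec, ← Matrix.mulVec_transpose, hsym, dotProduct_comm]
  have hq : ∀ s : ℝ, 0 ≤ (y ⬝ᵥ Mt.mulVec y) * (s * s) + (2 * (x ⬝ᵥ Mt.mulVec y)) * s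
      + (x ⬝ᵥ Mt.mulVec x) := by
    intro s
    have h0 := hM.dotProduct_mulVec_nonneg (x + s • y)
    simp only [star_trivial, Matrix.mulVec_add, Matrix.mulVec_smul, add_dotProduct,
      dotProduct_add, smul_dotProduct, dotProduct_smul, smul_eq_mul] at h0
    rw [hyx] at h0
    linarith [h0]
  have hd := discrim_le_zero hq
  unfold discrim at hd
  nlinarith [hd]

lemma frobNorm_nonneg {p q : ℕ} (A : Matrix (Fin p) (Fin q) ℝ) : 0 ≤ frobNorm A :=
  Real.sqrt_nonneg _

lemma frobNorm_sq {p q : ℕ} (A : Matrix (Fin p) (Fin q) ℝ) :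
    frobNorm A ^ 2 = ∑ i, ∑ j, (A i j) ^ 2 :=
  Real.sq_sqrt (Finset.sum_nonneg fun _ _ => Finset.sum_nonneg fun _ _ => sq_nonneg _)

lemma euclNorm_sq {p : ℕ} (v : Fin p → ℝ) : euclNorm v ^ 2 = v ⬝ᵥ v := by
  rw [euclNorm, Real.sq_sqrt (Finset.sum_nonneg fun i _ => sq_nonneg _)]
  simp [dotProduct, pow_two]

lemma trace_transpose_mul_le {p q : ℕ} (X Y : Matrix (Fin p) (Fin q) ℝ) :
    (Xᵀ * Y).trace ≤ frobNorm X * frobNorm Y := by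
  have h1 : (Xᵀ * Y).trace = ∑ ij : Fin p × Fin q, X ij.1 ij.2 * Y ij.1 ij.2 := by
    rw [Fintype.sum_prod_type]
    simp [Matrix.trace, Matrix.diag, Matrix.mul_apply, Matrix.transpose_apply]
    exact Finset.sum_comm
  have h2 := Finset.sum_mul_sq_le_sq_mul_sq Finset.univ
    (fun ij : Fin p × Fin q => X ij.1 ij.2) (fun ij => Y ij.1 ij.2)
  have hX : (∑ ij : Fin p × Fin q, X ij.1 ij.2 ^ 2) = frobNorm X ^ 2 := by
    rw [frobNorm_sq, Fintype.sum_prod_type]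
  have hY : (∑ ij : Fin p × Fin q, Y ij.1 ij.2 ^ 2) = frobNorm Y ^ 2 := by
    rw [frobNorm_sq, Fintype.sum_prod_type]
  rw [h1]
  set S := ∑ ij : Fin p × Fin q, X ij.1 ij.2 * Y ij.1 ij.2
  have h3 : S ^ 2 ≤ (frobNorm X * frobNorm Y) ^ 2 := by
    rw [mul_pow]; rw [hX, hY] at h2; exact h2
  have h4 : 0 ≤ frobNorm X * frobNorm Y := mul_nonneg (frobNorm_nonneg _) (frobNorm_nonneg _)
  nlinarith [sq_nonneg (S - frobNorm X * frobNorm Y), sq_nonneg (S + frobNorm X * frobNorm Y)]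

lemma frobNorm_mul_le {p q r : ℕ} (S : Matrix (Fin p) (Fin q) ℝ) (X : Matrix (Fin q) (Fin r) ℝ) :
    frobNorm (S * X) ≤ frobNorm S * frobNorm X := by
  have h1 : ∑ i, ∑ j, ((S * X) i j) ^ 2 ≤ (frobNorm S ^ 2) * (frobNorm X ^ 2) := by
    have step : ∑ i, ∑ j, ((S * X) i j) ^ 2
        ≤ ∑ i, ∑ j : Fin r, (∑ l, S i l ^ 2) * (∑ l, X l j ^ 2) := by
      refine Finset.sum_le_sum fun i _ => Finset.sum_le_sum fun j _ => ?_
      have := Finset.sum_mul_sq_le_sq_mul_sq Finset.univ (fun l => S i l) (fun l => X l j)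
      simpa [Matrix.mul_apply] using this
    refine step.trans (le_of_eq ?_)
    calc ∑ i, ∑ j : Fin r, (∑ l, S i l ^ 2) * (∑ l, X l j ^ 2)
        = ∑ i, (∑ l, S i l ^ 2) * (∑ j : Fin r, ∑ l, X l j ^ 2) :=
          Finset.sum_congr rfl fun i _ => (Finset.mul_sum _ _ _).symm
      _ = (∑ i, ∑ l, S i l ^ 2) * (∑ j : Fin r, ∑ l, X l j ^ 2) := by rw [Finset.sum_mul]
      _ = (frobNorm S ^ 2) * (frobNorm X ^ 2) := by
          rw [frobNorm_sq, frobNorm_sq]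
          congr 1
          exact Finset.sum_comm
  calc frobNorm (S * X) = Real.sqrt (∑ i, ∑ j, ((S * X) i j) ^ 2) := rfl
    _ ≤ Real.sqrt ((frobNorm S ^ 2) * (frobNorm X ^ 2)) := Real.sqrt_le_sqrt h1
    _ = frobNorm S * frobNorm X := by
        rw [Real.sqrt_mul (sq_nonneg _), Real.sqrt_sq (frobNorm_nonneg _),
          Real.sqrt_sq (frobNorm_nonneg _)]

lemma quad_hi {p : ℕ} {G : Matrix (Fin p) (Fin p) ℝ} {γhi : ℝ} (hγhi : 0 < γhi)
    (hdet : G.det ≠ 0) (hpsd : G.PosSemidef)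
    (hhi : (γhi • (1 : Matrix (Fin p) (Fin p) ℝ) - G).PosSemidef) (v : Fin p → ℝ) :
    v ⬝ᵥ v ≤ γhi * (v ⬝ᵥ G⁻¹.mulVec v) := by
  set u : Fin p → ℝ := G⁻¹.mulVec v with hu
  have hGu : G.mulVec u = v := by
    rw [hu, Matrix.mulVec_mulVec, Matrix.mul_nonsing_inv G (isUnit_iff_ne_zero.2 hdet),
      Matrix.one_mulVec]
  have hcs := psd_cs hpsd v u
  rw [hGu] at hcs
  have hGvle : v ⬝ᵥ G.mulVec v ≤ γhi * (v ⬝ᵥ v) := by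
    have h0 := hhi.dotProduct_mulVec_nonneg v
    simp only [star_trivial, Matrix.sub_mulVec, Matrix.smul_mulVec, Matrix.one_mulVec,
      dotProduct_sub, dotProduct_smul, smul_eq_mul] at h0
    linarith
  have huv : 0 ≤ u ⬝ᵥ v := by
    have h0 := hpsd.dotProduct_mulVec_nonneg u
    rw [star_trivial, hGu] at h0
    exact h0
  have hvv : 0 ≤ v ⬝ᵥ v := by
    have h0 := Matrix.PosSemidef.one (n := Fin p) (R := ℝ) |>.dotProduct_mulVec_nonneg v
    simpa using h0
  have hcomm : v ⬝ᵥ u = u ⬝ᵥ v := dotProduct_comm _ _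
  rw [hcomm]
  rcases eq_or_lt_of_le hvv with h0 | hpos
  · rw [← h0]
    exact mul_nonneg hγhi.le huv
  · nlinarith [hcs, mul_le_mul_of_nonneg_right hGvle huv, hpos, huv, hγhi]

lemma quad_lo {p : ℕ} {G : Matrix (Fin p) (Fin p) ℝ} {γlo : ℝ} (hγlo : 0 < γlo)
    (hdet : G.det ≠ 0) (hpsd : G.PosSemidef)
    (hlo : (G - γlo • (1 : Matrix (Fin p) (Fin p) ℝ)).PosSemidef) (v : Fin p → ℝ) :
    γlo * (v ⬝ᵥ G⁻¹.mulVec v) ≤ v ⬝ᵥ v := by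
  set u : Fin p → ℝ := G⁻¹.mulVec v with hu
  have hGu : G.mulVec u = v := by
    rw [hu, Matrix.mulVec_mulVec, Matrix.mul_nonsing_inv G (isUnit_iff_ne_zero.2 hdet),
      Matrix.one_mulVec]
  have ha : u ⬝ᵥ v = u ⬝ᵥ G.mulVec u := by rw [hGu]
  have hann : 0 ≤ u ⬝ᵥ v := by
    rw [ha]
    have h0 := hpsd.dotProduct_mulVec_nonneg u
    rwa [star_trivial] at h0
  have hlo2 : γlo * (u ⬝ᵥ u) ≤ u ⬝ᵥ v := by
    rw [ha]
    have h0 := hlo.dotProduct_mulVec_nonneg u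
    simp only [star_trivial, Matrix.sub_mulVec, Matrix.smul_mulVec, Matrix.one_mulVec,
      dotProduct_sub, dotProduct_smul, smul_eq_mul] at h0
    linarith
  have hcs : (u ⬝ᵥ v) ^ 2 ≤ (u ⬝ᵥ u) * (v ⬝ᵥ v) := by
    have h := Finset.sum_mul_sq_le_sq_mul_sq Finset.univ u v
    simpa [dotProduct, pow_two] using h
  have hvv : 0 ≤ v ⬝ᵥ v := by
    have h := Finset.sum_nonneg (s := Finset.univ) (f := fun i => v i * v i)
      (fun i _ => mul_self_nonneg (v i))
    simpa [dotProduct] using h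
  have huu : 0 ≤ u ⬝ᵥ u := by
    have h := Finset.sum_nonneg (s := Finset.univ) (f := fun i => u i * u i)
      (fun i _ => mul_self_nonneg (u i))
    simpa [dotProduct] using h
  have hcomm : v ⬝ᵥ u = u ⬝ᵥ v := dotProduct_comm _ _
  rw [hcomm]
  rcases eq_or_lt_of_le hann with h0 | hpos
  · rw [← h0, mul_zero]
    exact hvv
  · nlinarith [mul_le_mul_of_nonneg_right hlo2 hvv, mul_le_mul_of_nonneg_left hcs hγlo.le,
      hpos, hvv]

end Helpers

/-- Theorem 1: uniform ultimate boundedness of the controller weight estimation error. -/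
theorem stmt0 (T₀ : ℝ) (M K m : ℕ)
    (Sig : ℝ → Matrix (Fin M) (Fin K) ℝ) (Del : ℝ → Matrix (Fin M) (Fin m) ℝ)
    (hSigCont : ContinuousOn Sig (Set.Ici T₀)) (hDelCont : ContinuousOn Del (Set.Ici T₀))
    (Sbar Dbar : ℝ)
    (hSbar : ∀ t ≥ T₀, frobNorm (Sig t) ≤ Sbar)
    (hDbar : ∀ t ≥ T₀, frobNorm (Del t) ≤ Dbar)
    (k : ℝ) (hk : 0 < k)
    (hFullRank : ∀ t ≥ T₀, ∀ v : Fin K → ℝ,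
      k * euclNorm v ^ 2 ≤ v ⬝ᵥ ((Sig t)ᵀ * Sig t).mulVec v)
    (α β : ℝ) (hα : 0 < α) (hβ : 0 < β)
    (Γ : ℝ → Matrix (Fin K) (Fin K) ℝ)
    (hΓderiv : ∀ t ≥ T₀, HasDerivAt Γ (β • Γ t - α • (Γ t * (Sig t)ᵀ * Sig t * Γ t)) t)
    (hΓpd : ∀ t ≥ T₀, (Γ t).PosDef)
    (γlo γhi : ℝ) (hγlo : 0 < γlo) (hγ : γlo ≤ γhi)
    (hΓlo : ∀ t ≥ T₀, (Γ t - γlo • (1 : Matrix (Fin K) (Fin K) ℝ)).PosSemidef)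
    (hΓhi : ∀ t ≥ T₀, (γhi • (1 : Matrix (Fin K) (Fin K) ℝ) - Γ t).PosSemidef)
    (W : ℝ → Matrix (Fin K) (Fin m) ℝ)
    (hWderiv : ∀ t ≥ T₀, HasDerivAt W (-(α • (Γ t * (Sig t)ᵀ * (Sig t * W t - Del t)))) t)
    (A B : ℝ)
    (hA : A = (γlo / 2) * (α * k + β / γhi))
    (hB : B = 2 * (α * Sbar * Dbar) ^ 2 / (α * k + β / γhi)) :
    (∀ t ≥ T₀,
        ((W t)ᵀ * (Γ t)⁻¹ * W t).trace ≤
          ((W T₀)ᵀ * (Γ T₀)⁻¹ * W T₀).trace * Real.exp (-A * (t - T₀)) + B / A) ∧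
      limsup (fun t => frobNorm (W t)) atTop ≤ Real.sqrt (γhi * B / A) := by
  have hγhi : 0 < γhi := lt_of_lt_of_le hγlo hγ
  set c : ℝ := α * k + β / γhi with hc
  have hcpos : 0 < c := add_pos (mul_pos hα hk) (div_pos hβ hγhi)
  have hApos : 0 < A := by rw [hA]; positivity
  have hSb : 0 ≤ Sbar := (frobNorm_nonneg _).trans (hSbar T₀ le_rfl)
  have hDb : 0 ≤ Dbar := (frobNorm_nonneg _).trans (hDbar T₀ le_rfl)
  have hBnn : 0 ≤ B := by rw [hB]; positivity
  set Vf : ℝ → ℝ := fun s => ((W s)ᵀ * (Γ s)⁻¹ * W s).trace with hVf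
  set q1 : ℝ → ℝ := fun s => ((W s)ᵀ * ((Sig s)ᵀ * Sig s) * W s).trace with hq1
  set q2 : ℝ → ℝ := fun s => ((W s)ᵀ * ((Sig s)ᵀ * Del s)).trace with hq2
  set DV : ℝ → ℝ := fun s => -β * Vf s - α * q1 s + 2 * α * q2 s with hDV
  have hdet : ∀ t, t ≥ T₀ → (Γ t).det ≠ 0 := fun t ht => (hΓpd t ht).det_pos.ne'
  -- derivative of V
  have hVd : ∀ t, t ≥ T₀ → HasDerivAt Vf (DV t) t := by
    intro t ht
    have hNder := inv_hasDerivAt (fun i j => entry_hasDerivAt (hΓderiv t ht) i j) (hdet t ht)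
    have H := hasDerivAt_traceForm (X := W) (N := fun s => (Γ s)⁻¹)
      (X' := -(α • (Γ t * (Sig t)ᵀ * (Sig t * W t - Del t))))
      (N' := -((Γ t)⁻¹ * (β • Γ t - α • (Γ t * (Sig t)ᵀ * Sig t * Γ t)) * (Γ t)⁻¹))
      (fun i j => entry_hasDerivAt (hWderiv t ht) i j) hNder
    have hNG : (Γ t)⁻¹ * Γ t = 1 := Matrix.nonsing_inv_mul _ (isUnit_iff_ne_zero.2 (hdet t ht))
    have hGN : Γ t * (Γ t)⁻¹ = 1 := Matrix.mul_nonsing_inv _ (isUnit_iff_ne_zero.2 (hdet t ht))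
    have hGsym : (Γ t)ᵀ = Γ t := by
      have h1 := (hΓpd t ht).1
      rwa [Matrix.IsHermitian, Matrix.conjTranspose_eq_transpose_of_trivial] at h1
    have hNsym : ((Γ t)⁻¹)ᵀ = (Γ t)⁻¹ := by
      rw [Matrix.transpose_nonsing_inv, hGsym]
    -- simplify N'
    have hN' : -((Γ t)⁻¹ * (β • Γ t - α • (Γ t * (Sig t)ᵀ * Sig t * Γ t)) * (Γ t)⁻¹)
        = -(β • (Γ t)⁻¹) + α • ((Sig t)ᵀ * Sig t) := by
      simp only [Matrix.mul_sub, Matrix.sub_mul, Matrix.mul_smul, Matrix.smul_mul,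
        ← Matrix.mul_assoc, hNG, Matrix.one_mul]
      rw [Matrix.mul_assoc ((Sig t)ᵀ * Sig t) (Γ t) ((Γ t)⁻¹), hGN, Matrix.mul_one]
      abel
    have hNX' : (Γ t)⁻¹ * (-(α • (Γ t * (Sig t)ᵀ * (Sig t * W t - Del t))))
        = -(α • ((Sig t)ᵀ * (Sig t * W t - Del t))) := by
      simp only [Matrix.mul_neg, Matrix.mul_smul, ← Matrix.mul_assoc, hNG, Matrix.one_mul]
    have e1 : ((W t)ᵀ * (Γ t)⁻¹ * (-(α • (Γ t * (Sig t)ᵀ * (Sig t * W t - Del t))))).trace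
        = -α * q1 t + α * q2 t := by
      rw [Matrix.mul_assoc, hNX']
      simp only [Matrix.mul_neg, Matrix.mul_smul, Matrix.mul_sub, Matrix.trace_neg,
        Matrix.trace_smul, Matrix.trace_sub, smul_eq_mul, hq1, hq2]
      rw [show ((W t)ᵀ * ((Sig t)ᵀ * Sig t) * W t) = (W t)ᵀ * ((Sig t)ᵀ * (Sig t * W t)) by
        rw [Matrix.mul_assoc, Matrix.mul_assoc]]
      ring
    have e2 : ((-(α • (Γ t * (Sig t)ᵀ * (Sig t * W t - Del t))))ᵀ * (Γ t)⁻¹ * W t).trace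
        = -α * q1 t + α * q2 t := by
      rw [← e1, ← Matrix.trace_transpose ((W t)ᵀ * (Γ t)⁻¹ *
        (-(α • (Γ t * (Sig t)ᵀ * (Sig t * W t - Del t)))))]
      congr 1
      rw [Matrix.transpose_mul, Matrix.transpose_mul, hNsym, Matrix.transpose_transpose,
        Matrix.mul_assoc]
    have e3 : ((W t)ᵀ * (-((Γ t)⁻¹ * (β • Γ t - α • (Γ t * (Sig t)ᵀ * Sig t * Γ t)) * (Γ t)⁻¹))
          * W t).trace = -β * Vf t + α * q1 t := by
      rw [hN']
      simp only [Matrix.mul_add, Matrix.add_mul, Matrix.mul_neg, Matrix.neg_mul,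
        Matrix.mul_smul, Matrix.smul_mul, Matrix.trace_add, Matrix.trace_neg,
        Matrix.trace_smul, smul_eq_mul, hVf, hq1]
      ring
    have hgoal : DV t = ((-(α • (Γ t * (Sig t)ᵀ * (Sig t * W t - Del t))))ᵀ * (Γ t)⁻¹ * W t).trace
        + ((W t)ᵀ * (-((Γ t)⁻¹ * (β • Γ t - α • (Γ t * (Sig t)ᵀ * Sig t * Γ t)) * (Γ t)⁻¹))
          * W t).trace
        + ((W t)ᵀ * (Γ t)⁻¹ * (-(α • (Γ t * (Sig t)ᵀ * (Sig t * W t - Del t))))).trace := by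
      rw [e1, e2, e3, hDV]
      ring
    rw [hVf]
    rw [hgoal]
    exact H
  -- the differential inequality
  have hbound : ∀ t, t ≥ T₀ → DV t ≤ -A * Vf t + B := by
    intro t ht
    set F : ℝ := frobNorm (W t) with hF
    have hFnn : 0 ≤ F := frobNorm_nonneg _
    have hfro2 : F ^ 2 = ∑ i : Fin m, (fun j => W t j i) ⬝ᵥ (fun j => W t j i) := by
      rw [hF, frobNorm_sq]
      rw [Finset.sum_comm]
      refine Finset.sum_congr rfl fun i _ => ?_
      simp [dotProduct, pow_two]
    -- q1 lower bound
    have hq1ineq : k * F ^ 2 ≤ q1 t := by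
      simp only [hq1]
      rw [traceForm_eq_sum_cols, hfro2, Finset.mul_sum]
      refine Finset.sum_le_sum fun i _ => ?_
      have := hFullRank t ht (fun j => W t j i)
      rwa [euclNorm_sq] at this
    -- q2 upper bound
    have hq2ineq : q2 t ≤ Sbar * Dbar * F := by
      have hshape : q2 t = ((Sig t * W t)ᵀ * Del t).trace := by
        rw [hq2, Matrix.transpose_mul, Matrix.mul_assoc]
      have h1 : q2 t ≤ frobNorm (Sig t * W t) * frobNorm (Del t) := by
        rw [hshape]; exact trace_transpose_mul_le _ _
      have h2 : frobNorm (Sig t * W t) ≤ Sbar * F := by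
        refine (frobNorm_mul_le (Sig t) (W t)).trans ?_
        exact mul_le_mul_of_nonneg_right (hSbar t ht) hFnn
      have h3 : frobNorm (Del t) ≤ Dbar := hDbar t ht
      calc q2 t ≤ frobNorm (Sig t * W t) * frobNorm (Del t) := h1
        _ ≤ (Sbar * F) * Dbar :=
            mul_le_mul h2 h3 (frobNorm_nonneg _) (by positivity)
        _ = Sbar * Dbar * F := by ring
    -- V bounds
    have hVhi : F ^ 2 ≤ γhi * Vf t := by
      simp only [hVf]
      rw [traceForm_eq_sum_cols, hfro2, Finset.mul_sum]
      exact Finset.sum_le_sum fun i _ =>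
        quad_hi hγhi (hdet t ht) (hΓpd t ht).posSemidef (hΓhi t ht) _
    have hVlo : γlo * Vf t ≤ F ^ 2 := by
      simp only [hVf]
      rw [traceForm_eq_sum_cols, hfro2, Finset.mul_sum]
      exact Finset.sum_le_sum fun i _ =>
        quad_lo hγlo (hdet t ht) (hΓpd t ht).posSemidef (hΓlo t ht) _
    -- assemble
    have h1 : β / γhi * F ^ 2 ≤ β * Vf t := by
      calc β / γhi * F ^ 2 ≤ β / γhi * (γhi * Vf t) :=
            mul_le_mul_of_nonneg_left hVhi (div_nonneg hβ.le hγhi.le)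
        _ = β * Vf t := by field_simp
    have h2 : α * k * F ^ 2 ≤ α * q1 t := by
      calc α * k * F ^ 2 = α * (k * F ^ 2) := by ring
        _ ≤ α * q1 t := mul_le_mul_of_nonneg_left hq1ineq hα.le
    have hBc : B * c = 2 * (α * Sbar * Dbar) ^ 2 := by
      rw [hB]
      field_simp
    have hyoung : 2 * α * q2 t ≤ c / 2 * F ^ 2 + B := by
      have ha : 2 * α * q2 t ≤ 2 * (α * Sbar * Dbar) * F := by
        calc 2 * α * q2 t ≤ 2 * α * (Sbar * Dbar * F) := by
              refine mul_le_mul_of_nonneg_left hq2ineq (by positivity)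
          _ = 2 * (α * Sbar * Dbar) * F := by ring
      refine ha.trans ?_
      have key : c / 2 * F ^ 2 + B - 2 * (α * Sbar * Dbar) * F
          = (c * F - 2 * (α * Sbar * Dbar)) ^ 2 / (2 * c) := by
        rw [hB]; field_simp; ring
      have hnn : 0 ≤ (c * F - 2 * (α * Sbar * Dbar)) ^ 2 / (2 * c) :=
        div_nonneg (sq_nonneg _) (by linarith)
      linarith [key, hnn]
    have h3 : A * Vf t = c / 2 * (γlo * Vf t) := by rw [hA]; ring
    have h4 : c / 2 * (γlo * Vf t) ≤ c / 2 * F ^ 2 :=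
      mul_le_mul_of_nonneg_left hVlo (by positivity)
    have hcF : c / 2 * F ^ 2 * 2 = α * k * F ^ 2 + β / γhi * F ^ 2 := by rw [hc]; ring
    simp only [hDV]
    linarith [h1, h2, hyoung, h3, h4, hcF]
  -- Gronwall
  have main : ∀ t ≥ T₀, Vf t ≤ Vf T₀ * Real.exp (-A * (t - T₀)) + B / A := by
    intro t ht
    have hcont : ContinuousOn Vf (Set.Icc T₀ t) := fun x hx =>
      ((hVd x hx.1).continuousAt).continuousWithinAt
    have hgr := le_gronwallBound_of_liminf_deriv_right_le (f := Vf) (f' := DV)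
      (δ := Vf T₀) (K := -A) (ε := B) (a := T₀) (b := t) hcont
      (fun x hx r hr => ((hVd x hx.1).hasDerivWithinAt.liminf_right_slope_le hr))
      le_rfl
      (fun x hx => by
        have := hbound x hx.1
        linarith)
      t ⟨ht, le_rfl⟩
    have hKne : (-A) ≠ 0 := neg_ne_zero.2 hApos.ne'
    rw [gronwallBound_of_K_ne_0 hKne] at hgr
    have hexp1 : Real.exp (-A * (t - T₀)) ≤ 1 := by
      rw [Real.exp_le_one_iff]
      nlinarith
    have hexp0 : 0 < Real.exp (-A * (t - T₀)) := Real.exp_pos _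
    have hBA : 0 ≤ B / A := div_nonneg hBnn hApos.le
    have hfin : B / -A * (Real.exp (-A * (t - T₀)) - 1) ≤ B / A := by
      rw [div_neg]
      have : -(B / A) * (Real.exp (-A * (t - T₀)) - 1)
          = B / A * (1 - Real.exp (-A * (t - T₀))) := by ring
      rw [this]
      nlinarith
    linarith [hgr, hfin]
  constructor
  · intro t ht
    exact main t ht
  · -- limsup part
    set L : ℝ := Real.sqrt (γhi * B / A) with hL
    have hfro : ∀ t ≥ T₀, frobNorm (W t)
        ≤ Real.sqrt (γhi * (Vf T₀ * Real.exp (-A * (t - T₀))) + γhi * (B / A)) := by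
      intro t ht
      have h1 : frobNorm (W t) ^ 2 ≤ γhi * Vf t := by
        rw [frobNorm_sq]
        have hfro2 : (∑ i, ∑ j, (W t i j) ^ 2)
            = ∑ i : Fin m, (fun j => W t j i) ⬝ᵥ (fun j => W t j i) := by
          rw [Finset.sum_comm]
          refine Finset.sum_congr rfl fun i _ => ?_
          simp [dotProduct, pow_two]
        rw [hfro2]
        simp only [hVf]
        rw [traceForm_eq_sum_cols, Finset.mul_sum]
        exact Finset.sum_le_sum fun i _ =>
          quad_hi hγhi (hdet t ht) (hΓpd t ht).posSemidef (hΓhi t ht) _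
      have h2 : γhi * Vf t ≤ γhi * (Vf T₀ * Real.exp (-A * (t - T₀))) + γhi * (B / A) := by
        have := main t ht
        nlinarith
      have h3 : frobNorm (W t) ^ 2
          ≤ γhi * (Vf T₀ * Real.exp (-A * (t - T₀))) + γhi * (B / A) := h1.trans h2
      calc frobNorm (W t) = Real.sqrt (frobNorm (W t) ^ 2) :=
            (Real.sqrt_sq (frobNorm_nonneg _)).symm
        _ ≤ _ := Real.sqrt_le_sqrt h3
    have htend : Tendsto (fun t => Real.sqrt (γhi * (Vf T₀ * Real.exp (-A * (t - T₀)))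
        + γhi * (B / A))) atTop (nhds L) := by
      have h1 : Tendsto (fun t : ℝ => -A * (t - T₀)) atTop atBot := by
        apply Tendsto.neg_mul_atTop (by linarith : -A < 0)
        · exact tendsto_const_nhds
        · exact tendsto_atTop_add_const_right _ _ tendsto_id
      have h2 : Tendsto (fun t : ℝ => Real.exp (-A * (t - T₀))) atTop (nhds 0) :=
        Real.tendsto_exp_atBot.comp h1
      have h3 : Tendsto (fun t : ℝ => γhi * (Vf T₀ * Real.exp (-A * (t - T₀)))
          + γhi * (B / A)) atTop (nhds (γhi * (Vf T₀ * 0) + γhi * (B / A))) := by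
        exact (((h2.const_mul (Vf T₀)).const_mul γhi).add_const _)
      have h4 : γhi * (Vf T₀ * 0) + γhi * (B / A) = γhi * B / A := by ring
      rw [h4] at h3
      have := h3.sqrt
      rwa [hL]
    have hev : (fun t => frobNorm (W t)) ≤ᶠ[atTop]
        fun t => Real.sqrt (γhi * (Vf T₀ * Real.exp (-A * (t - T₀))) + γhi * (B / A)) := by
      filter_upwards [eventually_ge_atTop T₀] with t ht
      exact hfro t ht
    have hlb : IsBoundedUnder (· ≥ ·) atTop (fun t => frobNorm (W t)) :=
      ⟨0, Filter.eventually_map.2 (Filter.Eventually.of_forall fun t => frobNorm_nonneg _)⟩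
    have hco : IsCoboundedUnder (· ≤ ·) atTop (fun t => frobNorm (W t)) :=
      hlb.isCoboundedUnder_le
    have hbd : IsBoundedUnder (· ≤ ·) atTop
        (fun t => Real.sqrt (γhi * (Vf T₀ * Real.exp (-A * (t - T₀))) + γhi * (B / A))) :=
      htend.isBoundedUnder_le
    calc limsup (fun t => frobNorm (W t)) atTop
        ≤ limsup (fun t => Real.sqrt (γhi * (Vf T₀ * Real.exp (-A * (t - T₀)))
            + γhi * (B / A))) atTop := limsup_le_limsup hev hco hbd
      _ = L := htend.limsup_eq
end

section
/- Let β > 0 and let S : [0,∞) → ℝ^{K×K} be a continuous function with S(t) symmetric and k̲ I ⪯ S(t) ⪯ k̄ I for all t ≥ 0, where 0 < k̲ ≤ k̄. Let P : [0,∞) → ℝ^{K×K} be differentiable with P(t) symmetric, satisfying P'(t) = −β P(t) + S(t), and suppose p₁ I ⪯ P(0) ⪯ p₂ I with 0 < p₁ ≤ p₂. Then for all t ≥ 0, min(p₁, k̲/β) · I ⪯ P(t) ⪯ max(p₂, k̄/β) · I; consequently P(t) is positive definite for all t, and its inverse Γ(t) := P(t)⁻¹ satisfies (1/max(p₂, k̄/β))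 · I ⪯ Γ(t) ⪯ (1/min(p₁, k̲/β)) · I. -/
open Matrix

attribute [local instance] Matrix.normedAddCommGroup Matrix.normedSpace

private lemma scalar_lb {f u : ℝ → ℝ} {β c : ℝ} (hβ : 0 < β)
    (hf : ∀ t ≥ (0:ℝ), HasDerivAt f (-(β * f t) + u t) t)
    (hu : ∀ t ≥ (0:ℝ), β * c ≤ u t) (h0 : c ≤ f 0) :
    ∀ t ≥ (0:ℝ), c ≤ f t := by
  intro t ht
  set g : ℝ → ℝ := fun s => Real.exp (β * s) * (f s - c) with hg
  have hgd : ∀ s ≥ (0:ℝ), HasDerivAt g (Real.exp (β * s) * (u s - β * c)) s := by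
    intro s hs
    have he : HasDerivAt (fun s : ℝ => Real.exp (β * s)) (Real.exp (β * s) * β) s := by
      simpa using ((hasDerivAt_id s).const_mul β).exp
    have h2 := he.fun_mul ((hf s hs).sub_const c)
    refine h2.congr_deriv ?_
    ring
  have hmono : MonotoneOn g (Set.Ici (0:ℝ)) := by
    apply monotoneOn_of_deriv_nonneg (convex_Ici 0)
    · intro s hs
      exact ((hgd s hs).continuousAt).continuousWithinAt
    · intro s hs
      rw [interior_Ici] at hs
      exact ((hgd s (le_of_lt hs)).differentiableAt).differentiableWithinAt
    · intro s hs
      rw [interior_Ici] at hs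
      rw [(hgd s hs.le).deriv]
      exact mul_nonneg (Real.exp_pos _).le (sub_nonneg.2 (hu s hs.le))
  have h1 : g 0 ≤ g t := hmono Set.self_mem_Ici ht ht
  have h2 : g 0 = f 0 - c := by simp [hg]
  have h3 : 0 ≤ Real.exp (β * t) * (f t - c) := by
    have : (0:ℝ) ≤ g 0 := by rw [h2]; linarith
    exact le_trans this h1
  nlinarith [Real.exp_pos (β * t)]

private lemma quad_deriv {K : ℕ} {P : ℝ → Matrix (Fin K) (Fin K) ℝ}
    {P' : Matrix (Fin K) (Fin K) ℝ} {t : ℝ} (h : HasDerivAt P P' t) (x : Fin K → ℝ) :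
    HasDerivAt (fun s => x ⬝ᵥ (P s *ᵥ x)) (x ⬝ᵥ (P' *ᵥ x)) t := by
  let L : Matrix (Fin K) (Fin K) ℝ →ₗ[ℝ] ℝ :=
    { toFun := fun M => x ⬝ᵥ (M *ᵥ x)
      map_add' := fun M N => by simp [add_mulVec, dotProduct_add]
      map_smul' := fun c M => by simp [smul_mulVec, dotProduct_smul] }
  exact (L.toContinuousLinearMap.hasFDerivAt).comp_hasDerivAt t h

private lemma herm_of_symm {K : ℕ} {M : Matrix (Fin K) (Fin K) ℝ} (h : M.IsSymm) :
    M.IsHermitian := by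
  rw [Matrix.IsHermitian, conjTranspose_eq_transpose_of_trivial]
  exact h

private lemma psd_of_quad {K : ℕ} {M : Matrix (Fin K) (Fin K) ℝ} (hs : M.IsSymm)
    (h : ∀ x, 0 ≤ x ⬝ᵥ (M *ᵥ x)) : M.PosSemidef := by
  refine .of_dotProduct_mulVec_nonneg (herm_of_symm hs) fun x => ?_
  simpa using h x

private lemma symm_sub_smul_one {K : ℕ} {M : Matrix (Fin K) (Fin K) ℝ} (hs : M.IsSymm) (c : ℝ) :
    (M - c • (1 : Matrix (Fin K) (Fin K) ℝ)).IsSymm := by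
  rw [Matrix.IsSymm, transpose_sub, transpose_smul, transpose_one, hs]

private lemma symm_smul_one_sub {K : ℕ} {M : Matrix (Fin K) (Fin K) ℝ} (hs : M.IsSymm) (c : ℝ) :
    (c • (1 : Matrix (Fin K) (Fin K) ℝ) - M).IsSymm := by
  rw [Matrix.IsSymm, transpose_sub, transpose_smul, transpose_one, hs]

/-- Uniform two-sided Loewner bounds on the solution of the linear matrix ODE
`P' = −βP + S`, and the resulting bounds on the inverse gain `Γ = P⁻¹`. -/
theorem stmt5 (K : ℕ) (β : ℝ) (hβ : 0 < β)
    (S : ℝ → Matrix (Fin K) (Fin K) ℝ)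
    (hScont : ContinuousOn S (Set.Ici (0 : ℝ)))
    (hSsymm : ∀ t ≥ (0 : ℝ), (S t).IsSymm)
    (klo khi : ℝ) (hklo : 0 < klo) (hk : klo ≤ khi)
    (hSlo : ∀ t ≥ (0 : ℝ), (S t - klo • (1 : Matrix (Fin K) (Fin K) ℝ)).PosSemidef)
    (hShi : ∀ t ≥ (0 : ℝ), (khi • (1 : Matrix (Fin K) (Fin K) ℝ) - S t).PosSemidef)
    (P : ℝ → Matrix (Fin K) (Fin K) ℝ)
    (hPsymm : ∀ t ≥ (0 : ℝ), (P t).IsSymm)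
    (hPderiv : ∀ t ≥ (0 : ℝ), HasDerivAt P (-(β • P t) + S t) t)
    (p₁ p₂ : ℝ) (hp₁ : 0 < p₁) (hp : p₁ ≤ p₂)
    (hP0lo : (P 0 - p₁ • (1 : Matrix (Fin K) (Fin K) ℝ)).PosSemidef)
    (hP0hi : (p₂ • (1 : Matrix (Fin K) (Fin K) ℝ) - P 0).PosSemidef) :
    ∀ t ≥ (0 : ℝ),
      (P t - min p₁ (klo / β) • (1 : Matrix (Fin K) (Fin K) ℝ)).PosSemidef ∧
      (max p₂ (khi / β) • (1 : Matrix (Fin K) (Fin K) ℝ) - P t).PosSemidef ∧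
      (P t).PosDef ∧
      ((P t)⁻¹ - (1 / max p₂ (khi / β)) • (1 : Matrix (Fin K) (Fin K) ℝ)).PosSemidef ∧
      ((1 / min p₁ (klo / β)) • (1 : Matrix (Fin K) (Fin K) ℝ) - (P t)⁻¹).PosSemidef := by
  set cmin := min p₁ (klo / β) with hcmin_def
  set cmax := max p₂ (khi / β) with hcmax_def
  have hcmin_pos : 0 < cmin := lt_min hp₁ (div_pos hklo hβ)
  have hcmax_pos : 0 < cmax := lt_of_lt_of_le hp₁ (le_trans hp (le_max_left _ _))
  have hβcmin : β * cmin ≤ klo := by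
    have : cmin ≤ klo / β := min_le_right _ _
    calc β * cmin ≤ β * (klo / β) := by nlinarith
    _ = klo := by field_simp
  have hβcmax : khi ≤ β * cmax := by
    have : khi / β ≤ cmax := le_max_right _ _
    calc khi = β * (khi / β) := by field_simp
    _ ≤ β * cmax := by nlinarith
  -- quadratic form derivatives and bounds
  have hfderiv : ∀ (x : Fin K → ℝ), ∀ s ≥ (0:ℝ),
      HasDerivAt (fun r => x ⬝ᵥ (P r *ᵥ x))
        (-(β * (x ⬝ᵥ (P s *ᵥ x))) + x ⬝ᵥ (S s *ᵥ x)) s := by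
    intro x s hs
    have h := quad_deriv (hPderiv s hs) x
    convert h using 1
    simp [add_mulVec, neg_mulVec, smul_mulVec, dotProduct_add, dotProduct_neg,
      dotProduct_smul, smul_eq_mul]
  have hxx_nonneg : ∀ x : Fin K → ℝ, 0 ≤ x ⬝ᵥ x := by
    intro x
    exact Finset.sum_nonneg fun i _ => mul_self_nonneg _
  have hSq_lo : ∀ s ≥ (0:ℝ), ∀ x : Fin K → ℝ, klo * (x ⬝ᵥ x) ≤ x ⬝ᵥ (S s *ᵥ x) := by
    intro s hs x
    have h := (hSlo s hs).dotProduct_mulVec_nonneg x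
    simpa [sub_mulVec, smul_mulVec, one_mulVec, dotProduct_sub, dotProduct_smul,
      smul_eq_mul, sub_nonneg] using h
  have hSq_hi : ∀ s ≥ (0:ℝ), ∀ x : Fin K → ℝ, x ⬝ᵥ (S s *ᵥ x) ≤ khi * (x ⬝ᵥ x) := by
    intro s hs x
    have h := (hShi s hs).dotProduct_mulVec_nonneg x
    simpa [sub_mulVec, smul_mulVec, one_mulVec, dotProduct_sub, dotProduct_smul,
      smul_eq_mul, sub_nonneg] using h
  have hP0_lo : ∀ x : Fin K → ℝ, p₁ * (x ⬝ᵥ x) ≤ x ⬝ᵥ (P 0 *ᵥ x) := by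
    intro x
    have h := hP0lo.dotProduct_mulVec_nonneg x
    simpa [sub_mulVec, smul_mulVec, one_mulVec, dotProduct_sub, dotProduct_smul,
      smul_eq_mul, sub_nonneg] using h
  have hP0_hi : ∀ x : Fin K → ℝ, x ⬝ᵥ (P 0 *ᵥ x) ≤ p₂ * (x ⬝ᵥ x) := by
    intro x
    have h := hP0hi.dotProduct_mulVec_nonneg x
    simpa [sub_mulVec, smul_mulVec, one_mulVec, dotProduct_sub, dotProduct_smul,
      smul_eq_mul, sub_nonneg] using h
  -- lower quadratic bound for all times
  have hlow : ∀ (x : Fin K → ℝ), ∀ t ≥ (0:ℝ), cmin * (x ⬝ᵥ x) ≤ x ⬝ᵥ (P t *ᵥ x) := by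
    intro x
    apply scalar_lb hβ (hfderiv x)
    · intro s hs
      calc β * (cmin * (x ⬝ᵥ x)) = (β * cmin) * (x ⬝ᵥ x) := by ring
      _ ≤ klo * (x ⬝ᵥ x) := mul_le_mul_of_nonneg_right hβcmin (hxx_nonneg x)
      _ ≤ x ⬝ᵥ (S s *ᵥ x) := hSq_lo s hs x
    · calc cmin * (x ⬝ᵥ x) ≤ p₁ * (x ⬝ᵥ x) :=
        mul_le_mul_of_nonneg_right (min_le_left _ _) (hxx_nonneg x)
      _ ≤ x ⬝ᵥ (P 0 *ᵥ x) := hP0_lo x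
  -- upper quadratic bound for all times
  have hhigh : ∀ (x : Fin K → ℝ), ∀ t ≥ (0:ℝ), x ⬝ᵥ (P t *ᵥ x) ≤ cmax * (x ⬝ᵥ x) := by
    intro x t ht
    have key : ∀ t ≥ (0:ℝ), (0:ℝ) ≤ cmax * (x ⬝ᵥ x) - x ⬝ᵥ (P t *ᵥ x) := by
      apply scalar_lb hβ (f := fun r => cmax * (x ⬝ᵥ x) - x ⬝ᵥ (P r *ᵥ x))
        (u := fun r => β * (cmax * (x ⬝ᵥ x)) - x ⬝ᵥ (S r *ᵥ x))
      · intro s hs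
        have h := (hfderiv x s hs).const_sub (cmax * (x ⬝ᵥ x))
        refine h.congr_deriv ?_
        ring
      · intro s hs
        have h1 : x ⬝ᵥ (S s *ᵥ x) ≤ khi * (x ⬝ᵥ x) := hSq_hi s hs x
        have h2 : khi * (x ⬝ᵥ x) ≤ (β * cmax) * (x ⬝ᵥ x) :=
          mul_le_mul_of_nonneg_right hβcmax (hxx_nonneg x)
        nlinarith
      · have h1 : x ⬝ᵥ (P 0 *ᵥ x) ≤ p₂ * (x ⬝ᵥ x) := hP0_hi x
        have h2 : p₂ * (x ⬝ᵥ x) ≤ cmax * (x ⬝ᵥ x) :=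
          mul_le_mul_of_nonneg_right (le_max_left _ _) (hxx_nonneg x)
        linarith
    linarith [key t ht]
  intro t ht
  have hPsymm_t := hPsymm t ht
  -- first two conjuncts
  have c1 : (P t - cmin • (1 : Matrix (Fin K) (Fin K) ℝ)).PosSemidef := by
    apply psd_of_quad (symm_sub_smul_one hPsymm_t cmin)
    intro x
    have := hlow x t ht
    simp only [sub_mulVec, smul_mulVec, one_mulVec, dotProduct_sub, dotProduct_smul,
      smul_eq_mul]
    linarith
  have c2 : (cmax • (1 : Matrix (Fin K) (Fin K) ℝ) - P t).PosSemidef := by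
    apply psd_of_quad (symm_smul_one_sub hPsymm_t cmax)
    intro x
    have := hhigh x t ht
    simp only [sub_mulVec, smul_mulVec, one_mulVec, dotProduct_sub, dotProduct_smul,
      smul_eq_mul]
    linarith
  -- positive definiteness
  have hxx_pos : ∀ x : Fin K → ℝ, x ≠ 0 → 0 < x ⬝ᵥ x := by
    intro x hx
    have := dotProduct_self_star_pos_iff (v := x)
    rw [star_trivial] at this
    exact this.2 hx
  have c3 : (P t).PosDef := by
    refine .of_dotProduct_mulVec_pos (herm_of_symm hPsymm_t) fun x hx => ?_
    have h1 := hlow x t ht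
    have h2 := hxx_pos x hx
    have : (0:ℝ) < cmin * (x ⬝ᵥ x) := mul_pos hcmin_pos h2
    simpa using lt_of_lt_of_le this h1
  -- inverse bounds
  have hdet : IsUnit (P t).det := c3.det_pos.ne'.isUnit
  have hApsd : (P t).PosSemidef := c3.posSemidef
  open scoped MatrixOrder in set Q := CFC.sqrt (P t) with hQdef
  have hQQ : Q * Q = P t := open scoped MatrixOrder in CFC.sqrt_mul_sqrt_self _ hApsd.nonneg
  have hQsymm : Qᵀ = Q := by
    have := (open scoped MatrixOrder in (CFC.sqrt_nonneg (P t)).posSemidef).1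
    rwa [Matrix.IsHermitian, conjTranspose_eq_transpose_of_trivial] at this
  have hQdot : ∀ (z w : Fin K → ℝ), (Q *ᵥ z) ⬝ᵥ w = z ⬝ᵥ (Q *ᵥ w) := by
    intro z w
    rw [dotProduct_comm, dotProduct_mulVec, dotProduct_comm (w ᵥ* Q) z, ← mulVec_transpose,
      hQsymm]
  have hinv_quad : ∀ x : Fin K → ℝ,
      (1 / cmax) * (x ⬝ᵥ x) ≤ x ⬝ᵥ ((P t)⁻¹ *ᵥ x) ∧
      x ⬝ᵥ ((P t)⁻¹ *ᵥ x) ≤ (1 / cmin) * (x ⬝ᵥ x) := by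
    intro x
    obtain ⟨y, hy⟩ : ∃ y, y = (P t)⁻¹ *ᵥ x := ⟨_, rfl⟩
    have hx_eq : (P t) *ᵥ y = x := by
      rw [hy, mulVec_mulVec, Matrix.mul_nonsing_inv _ hdet, one_mulVec]
    obtain ⟨z, hz⟩ : ∃ z, z = Q *ᵥ y := ⟨_, rfl⟩
    have hQz : Q *ᵥ z = x := by
      rw [hz, mulVec_mulVec, hQQ, hx_eq]
    have e1 : x ⬝ᵥ ((P t)⁻¹ *ᵥ x) = z ⬝ᵥ z := by
      calc x ⬝ᵥ ((P t)⁻¹ *ᵥ x) = x ⬝ᵥ y := by rw [hy]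
      _ = ((P t) *ᵥ y) ⬝ᵥ y := by rw [hx_eq]
      _ = ((Q * Q) *ᵥ y) ⬝ᵥ y := by rw [hQQ]
      _ = (Q *ᵥ (Q *ᵥ y)) ⬝ᵥ y := by rw [mulVec_mulVec]
      _ = (Q *ᵥ y) ⬝ᵥ (Q *ᵥ y) := hQdot _ _
      _ = z ⬝ᵥ z := by rw [hz]
    have e2 : x ⬝ᵥ x = z ⬝ᵥ ((P t) *ᵥ z) := by
      calc x ⬝ᵥ x = (Q *ᵥ z) ⬝ᵥ (Q *ᵥ z) := by rw [hQz]
      _ = z ⬝ᵥ (Q *ᵥ (Q *ᵥ z)) := hQdot _ _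
      _ = z ⬝ᵥ ((Q * Q) *ᵥ z) := by rw [mulVec_mulVec]
      _ = z ⬝ᵥ ((P t) *ᵥ z) := by rw [hQQ]
    have hb1 : cmin * (z ⬝ᵥ z) ≤ z ⬝ᵥ ((P t) *ᵥ z) := hlow z t ht
    have hb2 : z ⬝ᵥ ((P t) *ᵥ z) ≤ cmax * (z ⬝ᵥ z) := hhigh z t ht
    have hzz := hxx_nonneg z
    constructor
    · rw [e1, e2]
      rw [div_mul_eq_mul_div, div_le_iff₀ hcmax_pos]
      nlinarith
    · rw [e1, e2]
      rw [div_mul_eq_mul_div, le_div_iff₀ hcmin_pos]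
      nlinarith
  have hinv_symm : ((P t)⁻¹).IsSymm := by
    rw [Matrix.IsSymm, transpose_nonsing_inv, hPsymm_t.eq]
  have c4 : ((P t)⁻¹ - (1 / cmax) • (1 : Matrix (Fin K) (Fin K) ℝ)).PosSemidef := by
    apply psd_of_quad (symm_sub_smul_one hinv_symm _)
    intro x
    have := (hinv_quad x).1
    simp only [sub_mulVec, smul_mulVec, one_mulVec, dotProduct_sub, dotProduct_smul,
      smul_eq_mul]
    linarith
  have c5 : ((1 / cmin) • (1 : Matrix (Fin K) (Fin K) ℝ) - (P t)⁻¹).PosSemidef := by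
    apply psd_of_quad (symm_smul_one_sub hinv_symm _)
    intro x
    have := (hinv_quad x).2
    simp only [sub_mulVec, smul_mulVec, one_mulVec, dotProduct_sub, dotProduct_smul,
      smul_eq_mul]
    linarith
  exact ⟨c1, c2, c3, c4, c5⟩
end

section
/- Let C > 0 and 𝒯 > 0, and let (V_s)_{s≥0} and (D_s)_{s≥0} be sequences of real numbers with V_s ≥ 0 and D_s > 0, satisfying: (i) V_{s+1} ≤ V_s e^{−C𝒯} + D_{s+1}/C for all s ≥ 0; (ii) D_{s+1} ≥ 2 D_s e^{−C𝒯} for all s ≥ 0; and (iii) V_0 ≤ 2 D_0 / C. Then V_s ≤ 2 D_s / C for all s ≥ 0. Moreover, if in addition D_s converges to a limit D̄ as s → ∞, then limsup_{s→∞} V_s ≤ 2 D̄ / C. -/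
open Filter

/-- Discrete recursion lemma for the purging analysis: the Lyapunov values at the
purging instants satisfy `V_s ≤ 2D_s/C`, and hence `limsup V_s ≤ 2Dbar/C` when
`D_s → Dbar`. -/
theorem stmt9 (C 𝒯 : ℝ) (hC : 0 < C) (h𝒯 : 0 < 𝒯)
    (V D : ℕ → ℝ) (hVnonneg : ∀ s, 0 ≤ V s) (hDpos : ∀ s, 0 < D s)
    (hrec : ∀ s, V (s + 1) ≤ V s * Real.exp (-C * 𝒯) + D (s + 1) / C)
    (hDgrow : ∀ s, 2 * D s * Real.exp (-C * 𝒯) ≤ D (s + 1))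
    (hV0 : V 0 ≤ 2 * D 0 / C) :
    (∀ s, V s ≤ 2 * D s / C) ∧
      ∀ Dbar : ℝ, Tendsto D atTop (nhds Dbar) → limsup V atTop ≤ 2 * Dbar / C := by
  have hexp : (0:ℝ) < Real.exp (-C * 𝒯) := Real.exp_pos _
  have hbound : ∀ s, V s ≤ 2 * D s / C := by
    intro s
    induction s with
    | zero => exact hV0
    | succ n ih =>
      calc V (n + 1) ≤ V n * Real.exp (-C * 𝒯) + D (n + 1) / C := hrec n
        _ ≤ (2 * D n / C) * Real.exp (-C * 𝒯) + D (n + 1) / C := by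
              have := mul_le_mul_of_nonneg_right ih hexp.le
              linarith
        _ = (2 * D n * Real.exp (-C * 𝒯)) / C + D (n + 1) / C := by ring
        _ ≤ D (n + 1) / C + D (n + 1) / C := by
              have h2 : 2 * D n * Real.exp (-C * 𝒯) / C ≤ D (n + 1) / C := by
                gcongr
                exact hDgrow n
              linarith
        _ = 2 * D (n + 1) / C := by ring
  refine ⟨hbound, fun Dbar hD => ?_⟩
  have htend : Tendsto (fun s => 2 * D s / C) atTop (nhds (2 * Dbar / C)) := by
    exact (hD.const_mul 2).div_const C
  have h1 : limsup V atTop ≤ limsup (fun s => 2 * D s / C) atTop := by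
    refine limsup_le_limsup (Eventually.of_forall hbound) ?_ ?_
    · exact IsCoboundedUnder.of_frequently_ge (Frequently.of_forall hVnonneg)
    · exact htend.isBoundedUnder_le
  rw [htend.limsup_eq] at h1
  exact h1
end

section
/- Let C > 0, 𝒯 > 0, γ̄ > 0, T₀ ∈ ℝ, and let (T_s)_{s≥0} be a strictly increasing sequence of times with T_{s+1} − T_s ≥ 𝒯 for all s and T_s → ∞. Let V : [T₀,∞) → ℝ be continuous and nonnegative, differentiable on each open interval (T_s, T_{s+1}), and let (D_s)_{s≥0} be positive reals with: V'(t) ≤ −C V(t) + D_{s+1} for all t ∈ (T_s, T_{s+1}) and all s ≥ 0; D_{s+1} ≥ 2 D_s e^{−C𝒯} for all s; V(T₀) ≤ 2 D_0 / C; and D_s → D̄ as s → ∞. Let W̃ : [T₀,∞) → ℝ^K satisfy ‖W̃(t)‖² ≤ 2 γ̄ V(t) for all t ≥ T₀. Then limsup_{s→∞} ‖W̃(T_s)‖ ≤ 2 √(γ̄ D̄ / C). -/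
open Filter

/-- Abstract (hybrid) form of Theorem 2: uniform ultimate boundedness of the
reward-weight estimation error under purging with a minimum dwell time. -/
theorem stmt10 (C 𝒯 γhi T₀ : ℝ) (hC : 0 < C) (h𝒯 : 0 < 𝒯) (hγhi : 0 < γhi) (K : ℕ)
    (T : ℕ → ℝ) (hT0 : T 0 = T₀) (hTmono : StrictMono T)
    (hTdwell : ∀ s, 𝒯 ≤ T (s + 1) - T s)
    (hTtop : Tendsto T atTop atTop)
    (V V' : ℝ → ℝ)
    (hVcont : ContinuousOn V (Set.Ici T₀))
    (hVnonneg : ∀ t ≥ T₀, 0 ≤ V t)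
    (hVderiv : ∀ s, ∀ t ∈ Set.Ioo (T s) (T (s + 1)), HasDerivAt V (V' t) t)
    (D : ℕ → ℝ) (hDpos : ∀ s, 0 < D s)
    (hineq : ∀ s, ∀ t ∈ Set.Ioo (T s) (T (s + 1)), V' t ≤ -C * V t + D (s + 1))
    (hDgrow : ∀ s, 2 * D s * Real.exp (-C * 𝒯) ≤ D (s + 1))
    (hV0 : V T₀ ≤ 2 * D 0 / C)
    (Dbar : ℝ) (hDlim : Tendsto D atTop (nhds Dbar))
    (W : ℝ → EuclideanSpace ℝ (Fin K))
    (hW : ∀ t ≥ T₀, ‖W t‖ ^ 2 ≤ 2 * γhi * V t) :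
    limsup (fun s => ‖W (T s)‖) atTop ≤ 2 * Real.sqrt (γhi * Dbar / C) := by
  have hTle : ∀ s, T₀ ≤ T s := fun s => hT0 ▸ hTmono.monotone (Nat.zero_le s)
  -- key induction: V (T s) ≤ 2 * D s / C
  have key : ∀ s, V (T s) ≤ 2 * D s / C := by
    intro s
    induction s with
    | zero => simpa [hT0] using hV0
    | succ s ih =>
      set a := T s with ha
      set b := T (s + 1) with hb
      have hab : a < b := hTmono (Nat.lt_succ_self s)
      set k : ℝ := D (s + 1) / C with hk
      set g : ℝ → ℝ := fun t => (V t - k) * Real.exp (C * t) with hg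
      have hIcc : Set.Icc a b ⊆ Set.Ici T₀ := fun t ht => le_trans (hTle s) ht.1
      have hgc : ContinuousOn g (Set.Icc a b) := by
        apply ContinuousOn.mul
        · exact ((hVcont.mono hIcc).sub continuousOn_const)
        · exact (Real.continuous_exp.comp (continuous_const.mul continuous_id)).continuousOn
      have hgd : ∀ t ∈ Set.Ioo a b,
          HasDerivAt g ((V' t + C * V t - D (s + 1)) * Real.exp (C * t)) t := by
        intro t ht
        have h1 : HasDerivAt (fun t => V t - k) (V' t) t := (hVderiv s t ht).sub_const k
        have h2 : HasDerivAt (fun t => Real.exp (C * t)) (C * Real.exp (C * t)) t := by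
          have := (Real.hasDerivAt_exp (C * t)).comp t ((hasDerivAt_id t).const_mul C)
          rw [show C * Real.exp (C * t) = Real.exp (C * t) * (C * 1) by ring]
          exact this
        have := h1.mul h2
        have hCk : C * k = D (s + 1) := by
          rw [hk]; field_simp [hC.ne']
        exact this.congr_deriv (by linear_combination -Real.exp (C * t) * hCk)
      have hanti : AntitoneOn g (Set.Icc a b) := by
        apply antitoneOn_of_deriv_nonpos (convex_Icc a b) hgc
        · intro t ht
          rw [interior_Icc] at ht
          exact (hgd t ht).differentiableAt.differentiableWithinAt
        · intro t ht
          rw [interior_Icc] at ht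
          rw [(hgd t ht).deriv]
          have := hineq s t ht
          have hle : V' t + C * V t - D (s + 1) ≤ 0 := by linarith
          exact mul_nonpos_of_nonpos_of_nonneg hle (Real.exp_pos _).le
      have hgba : g b ≤ g a :=
        hanti (Set.left_mem_Icc.2 hab.le) (Set.right_mem_Icc.2 hab.le) hab.le
      -- unfold
      have hVb : V b - k ≤ (V a - k) * Real.exp (-C * (b - a)) := by
        have hepos : (0:ℝ) < Real.exp (C * b) := Real.exp_pos _
        have : (V b - k) * Real.exp (C * b) ≤ (V a - k) * Real.exp (C * a) := hgba
        have h2 : (V a - k) * Real.exp (C * a) =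
            ((V a - k) * Real.exp (-C * (b - a))) * Real.exp (C * b) := by
          rw [mul_assoc, ← Real.exp_add]; ring_nf
        rw [h2] at this
        exact le_of_mul_le_mul_right this hepos
      have hVa0 : 0 ≤ V a := hVnonneg a (hTle s)
      have hk0 : 0 ≤ k := le_of_lt (div_pos (hDpos (s + 1)) hC)
      have hexp1 : (V a - k) * Real.exp (-C * (b - a)) ≤ V a * Real.exp (-C * (b - a)) := by
        have := mul_nonneg hk0 (Real.exp_pos (-C * (b - a))).le
        nlinarith [Real.exp_pos (-C * (b - a))]
      have hexp2 : V a * Real.exp (-C * (b - a)) ≤ V a * Real.exp (-C * 𝒯) := by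
        apply mul_le_mul_of_nonneg_left _ hVa0
        apply Real.exp_le_exp.2
        have := hTdwell s
        nlinarith
      have hexp3 : V a * Real.exp (-C * 𝒯) ≤ (2 * D s / C) * Real.exp (-C * 𝒯) :=
        mul_le_mul_of_nonneg_right ih (Real.exp_pos _).le
      have hexp4 : (2 * D s / C) * Real.exp (-C * 𝒯) ≤ D (s + 1) / C := by
        have heq : 2 * D s / C * Real.exp (-C * 𝒯) = (2 * D s * Real.exp (-C * 𝒯)) / C := by
          ring
        rw [heq]
        exact div_le_div_of_nonneg_right (hDgrow s) hC.le
      have : V b ≤ k + D (s + 1) / C := by linarith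
      have hkk : k + D (s + 1) / C = 2 * D (s + 1) / C := by rw [hk]; ring
      linarith [hkk ▸ this]
  -- norm bound at purge times
  have hnorm : ∀ s, ‖W (T s)‖ ≤ 2 * Real.sqrt (γhi * D s / C) := by
    intro s
    have h1 : ‖W (T s)‖ ^ 2 ≤ 2 * γhi * V (T s) := hW (T s) (hTle s)
    have h2 : 2 * γhi * V (T s) ≤ 4 * (γhi * D s / C) := by
      have := key s
      have : 2 * γhi * V (T s) ≤ 2 * γhi * (2 * D s / C) :=
        mul_le_mul_of_nonneg_left this (by positivity)
      calc 2 * γhi * V (T s) ≤ 2 * γhi * (2 * D s / C) := this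
        _ = 4 * (γhi * D s / C) := by ring
      
    have hx0 : (0:ℝ) ≤ γhi * D s / C :=
      le_of_lt (div_pos (mul_pos hγhi (hDpos s)) hC)
    have h3 : ‖W (T s)‖ ^ 2 ≤ (2 * Real.sqrt (γhi * D s / C)) ^ 2 := by
      have hsq : (2 * Real.sqrt (γhi * D s / C)) ^ 2 = 4 * (γhi * D s / C) := by
        rw [mul_pow, Real.sq_sqrt hx0]; ring
      rw [hsq]; exact le_trans h1 h2
    calc ‖W (T s)‖ = Real.sqrt (‖W (T s)‖ ^ 2) := (Real.sqrt_sq (norm_nonneg _)).symm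
      _ ≤ Real.sqrt ((2 * Real.sqrt (γhi * D s / C)) ^ 2) := Real.sqrt_le_sqrt h3
      _ = 2 * Real.sqrt (γhi * D s / C) := Real.sqrt_sq (by positivity)
  -- limsup
  have htend : Tendsto (fun s => 2 * Real.sqrt (γhi * D s / C)) atTop
      (nhds (2 * Real.sqrt (γhi * Dbar / C))) := by
    have h1 : Tendsto (fun s => γhi * D s / C) atTop (nhds (γhi * Dbar / C)) :=
      (hDlim.const_mul γhi).div_const C
    exact (h1.sqrt).const_mul 2
  have hbdd : IsBoundedUnder (· ≤ ·) atTop (fun s => 2 * Real.sqrt (γhi * D s / C)) :=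
    htend.isBoundedUnder_le
  have hcb : IsCoboundedUnder (· ≤ ·) atTop (fun s : ℕ => ‖W (T s)‖) :=
    isCoboundedUnder_le_of_le atTop (x := 0) (fun s => norm_nonneg _)
  calc limsup (fun s => ‖W (T s)‖) atTop
      ≤ limsup (fun s => 2 * Real.sqrt (γhi * D s / C)) atTop :=
        limsup_le_limsup (Eventually.of_forall hnorm) hcb hbdd
    _ = 2 * Real.sqrt (γhi * Dbar / C) := htend.limsup_eq
end
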